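/- Let λ > 0 be a real number, let (P_n)_{n≥2} satisfy P_2 = 1/λ and P_n = P_{n-1}·(1 − 1/(n−1)) + 1/λ for n ≥ 3, and let (I_n)_{n≥2} satisfy I_2 = 0 and I_n = I_{n-1} + P_{n-1}/(n−1) for n ≥ 3. Then for all n ≥ 3, I_n = (n−2)/(2λ), so the average i_n = I_n/(n−2) equals 1/(2λ). -/

import Mathlib

/-- With `P 2 = 1/λ`, `P n = P (n-1)(1 - 1/(n-1)) + 1/λ`, `I 2 = 0` and
`I n = I (n-1) + P (n-1)/(n-1)` for `n ≥ 3`, one has `I n = (n-2)/(2λ)` and the average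
`I n / (n-2) = 1/(2λ)` for all `n ≥ 3`. -/
theorem yule_interior_closed_form (lam : ℝ) (hlam : 0 < lam) (P I : ℕ → ℝ)
    (hP2 : P 2 = 1 / lam)
    (hPrec : ∀ n : ℕ, 3 ≤ n → P n = P (n - 1) * (1 - 1 / ((n : ℝ) - 1)) + 1 / lam)
    (hI2 : I 2 = 0)
    (hIrec : ∀ n : ℕ, 3 ≤ n → I n = I (n - 1) + P (n - 1) / ((n : ℝ) - 1)) :
    ∀ n : ℕ, 3 ≤ n →
      I n = ((n : ℝ) - 2) / (2 * lam) ∧ I n / ((n : ℝ) - 2) = 1 / (2 * lam) := by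
  have hlam' : lam ≠ 0 := ne_of_gt hlam
  have key : ∀ n : ℕ, 2 ≤ n → P n = (n : ℝ) / (2 * lam) ∧ I n = ((n : ℝ) - 2) / (2 * lam) := by
    intro n hn
    induction n, hn using Nat.le_induction with
    | base =>
      constructor
      · rw [hP2]; field_simp; norm_num
      · rw [hI2]; norm_num
    | succ n hn ih =>
      obtain ⟨hPn, hIn⟩ := ih
      have h3 : 3 ≤ n + 1 := by omega
      have hsub : n + 1 - 1 = n := by omega
      have hne : (n : ℝ) ≠ 0 := by positivity
      have hcast : ((n + 1 : ℕ) : ℝ) - 1 = (n : ℝ) := by push_cast; ring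
      constructor
      · rw [hPrec (n+1) h3, hsub, hcast, hPn]
        push_cast
        field_simp
        ring
      · rw [hIrec (n+1) h3, hsub, hcast, hIn, hPn]
        push_cast
        field_simp
        ring
  intro n hn
  obtain ⟨_, hIn⟩ := key n (by omega)
  have hne2 : (n : ℝ) - 2 ≠ 0 := by
    have : (3 : ℝ) ≤ (n : ℝ) := by exact_mod_cast hn
    linarith
  exact ⟨hIn, by rw [hIn]; field_simp⟩
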